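/- Let h̃(z) = (p/(q√(p+q)))·(e^{2qz/√(p+q)} - 1)/(1 - e^{-2pz/√(p+q)}) - 1/√(p+q), let f(z) be the formal series with f(z)²/2 = x(z) := ((p+q)/(pq)) log(1 + qz/√(p+q)) - (1/p) log(1 + √(p+q)z), let h be the compositional inverse of f, and define Y(z) = (1/2)(y₁(h(z)) - y₁(h(-z))) where y₁(z) = (√(p+q)/p)(log(1+√(p+q)z) - log(1+qz/√(p+q))). Then f(h̃(Y(z))) = z as formal power series. -/

import Mathlib

open PowerSeries

/-- The formal power series `log(1 + a z)`. -/
noncomputable def logOneAdd (a : ℂ) : PowerSeries ℂ :=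
  PowerSeries.mk fun n => if n = 0 then 0 else (-1)^(n+1) * a^n / n

/-- `exp(c z)` as a formal power series. -/
noncomputable def expc (c : ℂ) : PowerSeries ℂ :=
  PowerSeries.mk fun n => c^n / n.factorial

/-- Composition `f ∘ g` of formal power series (`g` with zero constant term). -/
noncomputable def pcomp (f g : PowerSeries ℂ) : PowerSeries ℂ :=
  PowerSeries.mk fun m => ∑ n ∈ Finset.range (m+1), coeff n f * coeff m (g^n)

open Finset

lemma coeff_pcomp (f g : PowerSeries ℂ) (m : ℕ) :
    coeff m (pcomp f g) = ∑ n ∈ range (m+1), coeff n f * coeff m (g^n) := by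
  simp [pcomp]

lemma coeff_pow_eq_zero' {g : PowerSeries ℂ} (hg : constantCoeff g = 0)
    {m n : ℕ} (h : m < n) : coeff m (g^n) = 0 := by
  obtain ⟨g', rfl⟩ := (PowerSeries.X_dvd_iff).mpr hg
  rw [mul_pow]
  rcases Nat.exists_eq_add_of_lt h with ⟨k, rfl⟩
  rw [show m + k + 1 = m + (k+1) by ring, pow_add]
  rw [mul_assoc]
  rw [PowerSeries.coeff_X_pow_mul']
  simp [Nat.not_le.mpr (Nat.lt_succ_of_le (Nat.le_add_right m k))]

lemma coeff_pcomp' {g : PowerSeries ℂ} (hg : constantCoeff g = 0)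
    (f : PowerSeries ℂ) {m N : ℕ} (h : m < N) :
    coeff m (pcomp f g) = ∑ n ∈ range N, coeff n f * coeff m (g^n) := by
  rw [coeff_pcomp]
  apply Finset.sum_subset
  · exact Finset.range_subset_range.mpr h
  · intro n _ hn
    rw [coeff_pow_eq_zero' hg (by simpa using hn)]
    ring

noncomputable def peval (P : Polynomial ℂ) (g : PowerSeries ℂ) : PowerSeries ℂ :=
  Polynomial.eval₂ C g P

lemma coeff_peval {g : PowerSeries ℂ} (P : Polynomial ℂ) {N : ℕ}
    (hP : P.natDegree < N) (m : ℕ) :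
    coeff m (peval P g) = ∑ k ∈ range N, P.coeff k * coeff m (g^k) := by
  rw [peval, Polynomial.eval₂_eq_sum_range' C hP g, map_sum]
  refine Finset.sum_congr rfl fun k _ => ?_
  rw [coeff_C_mul]

lemma coeff_pcomp_trunc {g : PowerSeries ℂ} (hg : constantCoeff g = 0)
    (f : PowerSeries ℂ) {m N : ℕ} (h : m < N) :
    coeff m (pcomp f g) = coeff m (peval (trunc N f) g) := by
  obtain ⟨N', rfl⟩ : ∃ N', N = N' + 1 := ⟨N-1, by omega⟩
  rw [coeff_peval (trunc (N'+1) f) (natDegree_trunc_lt f N') m,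
    coeff_pcomp' hg f h]
  refine Finset.sum_congr rfl fun k hk => ?_
  rw [coeff_trunc, if_pos (mem_range.mp hk)]

lemma coeff_mul_congr {a a' b b' : PowerSeries ℂ} {m : ℕ}
    (ha : ∀ i ≤ m, coeff i a = coeff i a')
    (hb : ∀ i ≤ m, coeff i b = coeff i b') :
    coeff m (a*b) = coeff m (a'*b') := by
  rw [coeff_mul, coeff_mul]
  refine Finset.sum_congr rfl fun x hx => ?_
  rw [Finset.HasAntidiagonal.mem_antidiagonal] at hx
  rw [ha x.1 (by omega), hb x.2 (by omega)]

lemma peval_coeff_congr {g : PowerSeries ℂ} (hg : constantCoeff g = 0)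
    {P Q : Polynomial ℂ} {N m : ℕ} (hPQ : ∀ k < N, P.coeff k = Q.coeff k)
    (hm : m < N) : coeff m (peval P g) = coeff m (peval Q g) := by
  set M := N + P.natDegree + Q.natDegree + 1 with hM
  rw [coeff_peval P (show P.natDegree < M by omega) m,
    coeff_peval Q (show Q.natDegree < M by omega) m]
  refine Finset.sum_congr rfl fun k _ => ?_
  rcases lt_or_ge k N with hk | hk
  · rw [hPQ k hk]
  · rw [coeff_pow_eq_zero' hg (lt_of_lt_of_le hm hk)]; ring

lemma pcomp_add (f₁ f₂ g : PowerSeries ℂ) :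
    pcomp (f₁ + f₂) g = pcomp f₁ g + pcomp f₂ g := by
  ext m
  simp only [coeff_pcomp, map_add, ← Finset.sum_add_distrib]
  exact Finset.sum_congr rfl fun n _ => by ring

lemma pcomp_C (c : ℂ) (g : PowerSeries ℂ) : pcomp (C c) g = C c := by
  ext m
  rw [coeff_pcomp]
  rw [Finset.sum_eq_single 0]
  · simp [coeff_C]
  · intro n _ hn
    rw [coeff_C, if_neg hn]; ring
  · simp

lemma pcomp_one (g : PowerSeries ℂ) : pcomp 1 g = 1 := by
  have := pcomp_C 1 g; simpa using this

lemma pcomp_X {g : PowerSeries ℂ} (hg : constantCoeff g = 0) : pcomp X g = g := by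
  ext m
  rw [coeff_pcomp' hg X (show m < m + 2 by omega)]
  rw [Finset.sum_eq_single 1]
  · simp
  · intro n _ hn
    rw [coeff_X, if_neg hn]; ring
  · simp

lemma pcomp_mul {g : PowerSeries ℂ} (hg : constantCoeff g = 0) (f₁ f₂ : PowerSeries ℂ) :
    pcomp (f₁ * f₂) g = pcomp f₁ g * pcomp f₂ g := by
  ext m
  rw [coeff_pcomp_trunc hg (f₁*f₂) (show m < m+1 by omega)]
  rw [coeff_mul_congr
    (fun i hi => coeff_pcomp_trunc hg f₁ (show i < m+1 by omega))
    (fun i hi => coeff_pcomp_trunc hg f₂ (show i < m+1 by omega))]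
  rw [show peval (trunc (m+1) f₁) g * peval (trunc (m+1) f₂) g
      = peval (trunc (m+1) f₁ * trunc (m+1) f₂) g from (Polynomial.eval₂_mul _ _).symm]
  refine peval_coeff_congr hg (fun k hk => ?_) (show m < m+1 by omega)
  rw [coeff_trunc, if_pos hk, coeff_mul_eq_coeff_trunc_mul_trunc f₁ f₂ hk,
    ← Polynomial.coeff_coe, Polynomial.coe_mul]

lemma pcomp_pow {g : PowerSeries ℂ} (hg : constantCoeff g = 0) (f : PowerSeries ℂ) (n : ℕ) :
    pcomp (f^n) g = (pcomp f g)^n := by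
  induction n with
  | zero => simpa using pcomp_one g
  | succ k ih => rw [pow_succ, pow_succ, pcomp_mul hg, ih]

lemma constantCoeff_pcomp (f g : PowerSeries ℂ) :
    constantCoeff (pcomp f g) = coeff 0 f := by
  rw [← coeff_zero_eq_constantCoeff, coeff_pcomp]
  simp

lemma pcomp_sub (f₁ f₂ g : PowerSeries ℂ) :
    pcomp (f₁ - f₂) g = pcomp f₁ g - pcomp f₂ g := by
  ext m
  simp only [coeff_pcomp, map_sub, ← Finset.sum_sub_distrib]
  exact Finset.sum_congr rfl fun n _ => by ring

lemma pcomp_peval {h : PowerSeries ℂ} (hh : constantCoeff h = 0)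
    (P : Polynomial ℂ) (g : PowerSeries ℂ) :
    pcomp (peval P g) h = peval P (pcomp g h) := by
  induction P using Polynomial.induction_on' with
  | add p q hp hq =>
      simp only [peval] at hp hq ⊢
      rw [Polynomial.eval₂_add, pcomp_add, hp, hq, Polynomial.eval₂_add]
  | monomial n c =>
      simp only [peval, Polynomial.eval₂_monomial]
      rw [pcomp_mul hh, pcomp_C, pcomp_pow hh]

lemma pcomp_assoc {g h : PowerSeries ℂ} (f : PowerSeries ℂ)
    (hg : constantCoeff g = 0) (hh : constantCoeff h = 0) :
    pcomp (pcomp f g) h = pcomp f (pcomp g h) := by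
  have hgh : constantCoeff (pcomp g h) = 0 := by
    rw [constantCoeff_pcomp, coeff_zero_eq_constantCoeff, hg]
  ext m
  rw [coeff_pcomp_trunc hh (pcomp f g) (show m < m+1 by omega)]
  rw [peval_coeff_congr hh (P := trunc (m+1) (pcomp f g))
    (Q := trunc (m+1) (peval (trunc (m+1) f) g)) (fun k hk => by
      rw [coeff_trunc, coeff_trunc, if_pos hk, if_pos hk]
      exact coeff_pcomp_trunc hg f hk) (show m < m+1 by omega)]
  rw [← coeff_pcomp_trunc hh _ (show m < m+1 by omega)]
  rw [pcomp_peval hh]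
  rw [← coeff_pcomp_trunc hgh f (show m < m+1 by omega)]

lemma deriv_peval (g : PowerSeries ℂ) (P : Polynomial ℂ) :
    d⁄dX ℂ (peval P g) = peval (Polynomial.derivative P) g * d⁄dX ℂ g := by
  induction P using Polynomial.induction_on' with
  | add p q hp hq =>
      simp only [peval] at hp hq ⊢
      rw [Polynomial.eval₂_add, map_add, hp, hq, map_add, Polynomial.eval₂_add, add_mul]
  | monomial n c =>
      simp only [peval, Polynomial.eval₂_monomial, Polynomial.derivative_monomial,
        Polynomial.eval₂_monomial]
      rw [Derivation.leibniz, Derivation.leibniz_pow, derivative_C]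
      simp only [smul_eq_mul, nsmul_eq_mul, smul_zero, add_zero, map_mul, map_natCast]
      ring

lemma pcomp_deriv {g : PowerSeries ℂ} (hg : constantCoeff g = 0) (f : PowerSeries ℂ) :
    d⁄dX ℂ (pcomp f g) = pcomp (d⁄dX ℂ f) g * d⁄dX ℂ g := by
  ext m
  rw [coeff_derivative, coeff_pcomp_trunc hg f (show m+1 < m+2 by omega),
    ← coeff_derivative, deriv_peval]
  refine (coeff_mul_congr (fun i hi => ?_) (fun _ _ => rfl)).symm
  rw [coeff_pcomp_trunc hg _ (show i < m+1 by omega)]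
  refine peval_coeff_congr hg (fun k hk => ?_) (show i < m+1 by omega)
  rw [coeff_trunc, if_pos hk, Polynomial.coeff_derivative, coeff_trunc,
    if_pos (show k+1 < m+2 by omega), coeff_derivative]

noncomputable def Pexp (g : PowerSeries ℂ) : PowerSeries ℂ := pcomp (expc 1) g

lemma deriv_expc_one : d⁄dX ℂ (expc 1) = expc 1 := by
  ext n
  rw [coeff_derivative]
  simp only [expc, coeff_mk, one_pow]
  rw [Nat.factorial_succ, Nat.cast_mul]
  have h1 : ((n+1 : ℕ) : ℂ) ≠ 0 := Nat.cast_ne_zero.mpr (Nat.succ_ne_zero n)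
  have h2 : ((n.factorial : ℕ) : ℂ) ≠ 0 := Nat.cast_ne_zero.mpr n.factorial_ne_zero
  field_simp
  push_cast; ring

lemma constantCoeff_Pexp (g : PowerSeries ℂ) : constantCoeff (Pexp g) = 1 := by
  rw [Pexp, constantCoeff_pcomp]
  simp [expc]

lemma Pexp_deriv {g : PowerSeries ℂ} (hg : constantCoeff g = 0) :
    d⁄dX ℂ (Pexp g) = Pexp g * d⁄dX ℂ g := by
  rw [Pexp, pcomp_deriv hg, deriv_expc_one]

lemma ode_uniq (w F G : PowerSeries ℂ) (hF : d⁄dX ℂ F = F * w)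
    (hG : d⁄dX ℂ G = G * w) (h0 : coeff 0 F = coeff 0 G) : F = G := by
  ext n
  induction n using Nat.strong_induction_on with
  | _ n ih =>
    match n with
    | 0 => exact h0
    | Nat.succ k =>
      have hFk := congrArg (coeff k) hF
      have hGk := congrArg (coeff k) hG
      rw [coeff_derivative] at hFk hGk
      have hne : ((k+1 : ℕ) : ℂ) ≠ 0 := Nat.cast_ne_zero.mpr (Nat.succ_ne_zero k)
      have : coeff k (F * w) = coeff k (G * w) := by
        rw [coeff_mul, coeff_mul]
        refine Finset.sum_congr rfl fun x hx => ?_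
        rw [Finset.HasAntidiagonal.mem_antidiagonal] at hx
        rw [ih x.1 (by omega)]
      have := hFk.trans (this.trans hGk.symm)
      exact mul_right_cancel₀ (by exact_mod_cast hne) this

lemma Pexp_add {u v : PowerSeries ℂ} (hu : constantCoeff u = 0)
    (hv : constantCoeff v = 0) : Pexp (u + v) = Pexp u * Pexp v := by
  have huv : constantCoeff (u + v) = 0 := by rw [map_add, hu, hv, add_zero]
  refine ode_uniq (d⁄dX ℂ (u+v)) _ _ (Pexp_deriv huv) ?_ ?_
  · rw [Derivation.leibniz, smul_eq_mul, smul_eq_mul, Pexp_deriv hu, Pexp_deriv hv,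
      map_add]
    ring
  · simp [coeff_zero_eq_constantCoeff, map_mul, constantCoeff_Pexp]

lemma pcomp_zero (f : PowerSeries ℂ) : pcomp f 0 = C (coeff 0 f) := by
  ext m
  rw [coeff_pcomp, Finset.sum_eq_single 0]
  · simp [coeff_C]
  · intro n _ hn
    rw [zero_pow hn, map_zero, mul_zero]
  · simp

lemma Pexp_zero : Pexp 0 = 1 := by
  rw [Pexp, pcomp_zero]
  simp [expc]

lemma Pexp_mul_neg {u : PowerSeries ℂ} (hu : constantCoeff u = 0) :
    Pexp u * Pexp (-u) = 1 := by
  rw [← Pexp_add hu (by rw [map_neg, hu, neg_zero]), add_neg_cancel, Pexp_zero]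

lemma Pexp_ne_zero (g : PowerSeries ℂ) : Pexp g ≠ 0 := fun h => by
  have := constantCoeff_Pexp g
  rw [h, map_zero] at this
  exact zero_ne_one this

lemma constantCoeff_logOneAdd (a : ℂ) : constantCoeff (logOneAdd a) = 0 := by
  rw [← coeff_zero_eq_constantCoeff]
  simp [logOneAdd]

lemma deriv_logOneAdd_mul (a : ℂ) :
    d⁄dX ℂ (logOneAdd a) * (1 + C a * X) = C a := by
  have hcoeff : ∀ n : ℕ, coeff n (d⁄dX ℂ (logOneAdd a)) = (-1)^n * a^(n+1) := by
    intro n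
    rw [coeff_derivative]
    simp only [logOneAdd, coeff_mk, Nat.succ_ne_zero, if_false]
    have hne : ((n+1 : ℕ) : ℂ) ≠ 0 := Nat.cast_ne_zero.mpr (Nat.succ_ne_zero n)
    rw [show ((n:ℂ)+1) = ((n+1:ℕ):ℂ) by push_cast; ring, div_mul_cancel₀ _ hne,
      show ((-1:ℂ))^(n+1+1) = (-1)^n by rw [pow_succ, pow_succ]; ring]
  ext n
  rw [mul_add, mul_one, map_add]
  rw [show d⁄dX ℂ (logOneAdd a) * (C a * X) = C a * (d⁄dX ℂ (logOneAdd a) * X) by ring]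
  match n with
  | 0 =>
    rw [coeff_C_mul, coeff_zero_mul_X, hcoeff 0]
    simp
  | Nat.succ k =>
    rw [coeff_C_mul, coeff_succ_mul_X, hcoeff (k+1), hcoeff k, coeff_C, if_neg (Nat.succ_ne_zero k)]
    ring

lemma Pexp_logOneAdd (a : ℂ) : Pexp (logOneAdd a) = 1 + C a * X := by
  refine ode_uniq (d⁄dX ℂ (logOneAdd a)) _ _ (Pexp_deriv (constantCoeff_logOneAdd a)) ?_ ?_
  · rw [show d⁄dX ℂ (1 + C a * X) = C a by
      rw [map_add, Derivation.leibniz, smul_eq_mul, smul_eq_mul]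
      simp]
    rw [mul_comm (1 + C a * X), deriv_logOneAdd_mul]
  · simp [coeff_zero_eq_constantCoeff, constantCoeff_Pexp, map_add, map_mul]

lemma expc_eq_Pexp (c : ℂ) : expc c = Pexp (C c * X) := by
  ext m
  rw [Pexp, coeff_pcomp, Finset.sum_eq_single m]
  · rw [mul_pow, ← map_pow, coeff_C_mul, coeff_X_pow, if_pos rfl]
    simp only [expc, coeff_mk, one_pow, mul_one]
    ring
  · intro n _ hn
    rw [mul_pow, ← map_pow, coeff_C_mul, coeff_X_pow, if_neg (fun h => hn h.symm)]
    ring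
  · simp

lemma pcomp_expc {Y : PowerSeries ℂ} (hY : constantCoeff Y = 0) (c : ℂ) :
    pcomp (expc c) Y = Pexp (C c * Y) := by
  rw [expc_eq_Pexp, Pexp, Pexp, pcomp_assoc _ (by simp [map_mul]) hY,
    pcomp_mul hY, pcomp_C, pcomp_X hY]

lemma rescale_pcomp (r : ℂ) (f g : PowerSeries ℂ) :
    rescale r (pcomp f g) = pcomp f (rescale r g) := by
  ext m
  rw [coeff_rescale, coeff_pcomp, coeff_pcomp, Finset.mul_sum]
  refine Finset.sum_congr rfl fun n _ => ?_
  rw [← map_pow, coeff_rescale]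
  ring

-- extra infra lemmas to append
lemma rescale_C_mul (r c : ℂ) (F : PowerSeries ℂ) :
    rescale r (C c * F) = C c * rescale r F := by
  ext m
  rw [coeff_rescale, coeff_C_mul, coeff_C_mul, coeff_rescale]
  ring

lemma coeff_one_Pexp (g : PowerSeries ℂ) : coeff 1 (Pexp g) = coeff 1 g := by
  rw [Pexp, coeff_pcomp, Finset.sum_range_succ, Finset.sum_range_one]
  simp [expc]

lemma rescale_C_self (r c : ℂ) : rescale r (C c) = C c := by
  have h := rescale_C_mul r c 1
  simpa using h

lemma Pexp_pcomp {g h : PowerSeries ℂ} (hg : constantCoeff g = 0)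
    (hh : constantCoeff h = 0) : Pexp (pcomp g h) = pcomp (Pexp g) h :=
  (pcomp_assoc (expc 1) hg hh).symm

set_option maxHeartbeats 1000000 in
/-- With `s = √(p+q)` (`p, q, p+q ≠ 0`), let
`x(z) = ((p+q)/(pq)) log(1+qz/s) - (1/p) log(1+sz)`,
`f(z) = z + …` the series with `f² = 2x`, `h` its compositional inverse,
`y₁(z) = (s/p)(log(1+sz) - log(1+qz/s))`,
`Y(z) = ½(y₁(h(z)) - y₁(h(-z)))` the odd part of `y₁(h(z))`, and
`h̃(z) = (p/(qs))(e^{2qz/s}-1)/(1-e^{-2pz/s}) - 1/s`.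
Then `f(h̃(Y(z))) = z`, i.e. `f ∘ h̃` is the compositional inverse of `Y`. -/
theorem f_htilde_inverse_of_Y
    (p q s : ℂ) (hp : p ≠ 0) (hq : q ≠ 0) (hs : s ≠ 0) (hsq : s^2 = p + q)
    (f h htilde : PowerSeries ℂ)
    (hf0 : coeff 0 f = 0) (hf1 : coeff 1 f = 1)
    (hfx : C ((1:ℂ)/2) * f^2
      = C ((p + q)/(p*q)) * logOneAdd (q/s) - C (1/p) * logOneAdd s)
    (hh0 : coeff 0 h = 0)
    (hfh : pcomp f h = X) (hhf : pcomp h f = X)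
    (hht : htilde * (1 - expc (-2*p/s))
      = C (p/(q*s)) * (expc (2*q/s) - 1) - C (1/s) * (1 - expc (-2*p/s)))
    (y₁ Y : PowerSeries ℂ)
    (hy1 : y₁ = C (s/p) * (logOneAdd s - logOneAdd (q/s)))
    (hY : Y = C ((1:ℂ)/2) * (pcomp y₁ h - rescale (-1) (pcomp y₁ h))) :
    pcomp f (pcomp htilde Y) = X := by
  have hCne : ∀ c : ℂ, c ≠ 0 → (C c) ≠ 0 := by
    intro c hc hzero
    apply hc
    have h0 := congrArg (constantCoeff) hzero
    rwa [constantCoeff_C, map_zero] at h0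
  -- constant scalar identities
  have hcsq : C s * C s = C p + C q := by
    rw [← map_mul, ← map_add]; congr 1; rw [← hsq]; ring
  have hc3 : C s * C s * C (q/s) = C q * C s := by
    rw [← map_mul, ← map_mul, ← map_mul]; congr 1; field_simp
  have hc4 : C s - C (q/s) = C (p/s) := by
    rw [← map_sub]; congr 1; field_simp; linear_combination hsq
  have hc5 : C (p/s) * C s = C p := by
    rw [← map_mul]; congr 1; field_simp
  have hc6 : C (2*q/s) = C (q/s) + C (q/s) := by
    rw [← map_add]; congr 1; ring
  have hc7 : C (-2*p/s) + (C s + C s) = C (2*q/s) := by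
    rw [← map_add, ← map_add]; congr 1; field_simp; linear_combination (2:ℂ) * hsq
  have hc8 : C (q*s) = C q * C s := by rw [← map_mul]
  have hc9 : C (p/(q*s)) * C (q*s) = C p := by
    rw [← map_mul]; congr 1; field_simp
  have hc10 : C (1/s) * C (q*s) = C q := by
    rw [← map_mul]; congr 1; field_simp
  have hk1 : C q * C ((p+q)/(p*q)) = C s * C (s/p) := by
    rw [← map_mul, ← map_mul]; congr 1; field_simp; linear_combination -hsq
  have hk2 : C s * C (s/p) - C q * C (1/p) = 1 := by
    rw [← map_mul, ← map_mul, ← map_sub, show (1 : PowerSeries ℂ) = C 1 from rfl]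
    congr 1; field_simp; linear_combination hsq
  have hk3 : C q * C ((p+q)/(p*q)) - C (q/s) * C (s/p) = 1 := by
    rw [← map_mul, ← map_mul, ← map_sub, show (1 : PowerSeries ℂ) = C 1 from rfl]
    congr 1; field_simp; ring
  have hk4 : C (q/s) * C (s/p) - C q * C (1/p) = 0 := by
    rw [← map_mul, ← map_mul, ← map_sub,
      show (0 : PowerSeries ℂ) = C 0 from (map_zero _).symm]
    congr 1; field_simp; ring
  -- basic constant-coefficient facts
  have hh0' : constantCoeff h = 0 := by rw [← coeff_zero_eq_constantCoeff]; exact hh0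
  have hL1c : constantCoeff (logOneAdd (q/s)) = 0 := constantCoeff_logOneAdd _
  have hL2c : constantCoeff (logOneAdd s) = 0 := constantCoeff_logOneAdd _
  have hy10 : constantCoeff y₁ = 0 := by
    rw [hy1, map_mul, map_sub, hL1c, hL2c]; simp
  set W := pcomp y₁ h with hW
  have hW0 : constantCoeff W = 0 := by
    rw [hW, constantCoeff_pcomp, coeff_zero_eq_constantCoeff, hy10]
  set V := rescale (-1) W with hV
  have hV0 : constantCoeff V = 0 := by
    rw [hV, ← coeff_zero_eq_constantCoeff, coeff_rescale, pow_zero, one_mul,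
      coeff_zero_eq_constantCoeff, hW0]
  have hY0 : constantCoeff Y = 0 := by
    rw [hY, map_mul, map_sub, hW0, hV0]; simp
  set M := C ((1:ℂ)/2) * (W + V) with hM
  have hM0 : constantCoeff M = 0 := by
    rw [hM, map_mul, map_add, hW0, hV0]; simp
  have hhalf : C ((1:ℂ)/2) + C ((1:ℂ)/2) = 1 := by
    rw [← map_add, show (1:ℂ)/2 + 1/2 = 1 by norm_num, map_one]
  have hWMY : W = M + Y := by rw [hM, hY]; linear_combination (-W) * hhalf
  have hVMY : V = M - Y := by rw [hM, hY]; linear_combination (-V) * hhalf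
  -- coefficient-1 facts
  have hh1 : coeff 1 h = 1 := by
    have h1 := congrArg (coeff 1) hfh
    rw [coeff_pcomp, Finset.sum_range_succ, Finset.sum_range_one, pow_zero, pow_one] at h1
    simpa [hf1] using h1
  have hy11 : coeff 1 y₁ = s/p * (s - q/s) := by
    rw [hy1, coeff_C_mul, map_sub]
    simp [logOneAdd, coeff_mk]
  have hW1 : coeff 1 W = 1 := by
    rw [hW, coeff_pcomp, Finset.sum_range_succ, Finset.sum_range_one, pow_zero, pow_one,
      hy11, hh1]
    rw [show (coeff 1) (1 : PowerSeries ℂ) = 0 by simp]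
    field_simp
    linear_combination hsq
  have hV1 : coeff 1 V = -1 := by
    rw [hV, coeff_rescale, hW1]; norm_num
  have hY1 : coeff 1 Y = 1 := by
    rw [hY, coeff_C_mul, map_sub, hW1, hV1]; norm_num
  -- step 1 : linear identities among the logs
  have e1 : C q * (C ((1:ℂ)/2) * f^2) + C s * y₁ = logOneAdd s := by
    rw [hfx, hy1]
    linear_combination (logOneAdd (q/s)) * hk1 + (logOneAdd s) * hk2
  have e2 : C q * (C ((1:ℂ)/2) * f^2) + C (q/s) * y₁ = logOneAdd (q/s) := by
    rw [hfx, hy1]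
    linear_combination (logOneAdd (q/s)) * hk3 + (logOneAdd s) * hk4
  -- step 2 : compose with h
  have hxcomp : pcomp (C ((1:ℂ)/2) * f^2) h = C ((1:ℂ)/2) * X^2 := by
    rw [pcomp_mul hh0', pcomp_C, pcomp_pow hh0', hfh]
  set G2 := C q * (C ((1:ℂ)/2) * X^2) with hG2
  have hL2comp : pcomp (logOneAdd s) h = G2 + C s * W := by
    rw [← e1, pcomp_add, pcomp_mul hh0', hxcomp, pcomp_mul hh0', pcomp_C, pcomp_C,
      ← hW, hG2]
  have hL1comp : pcomp (logOneAdd (q/s)) h = G2 + C (q/s) * W := by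
    rw [← e2, pcomp_add, pcomp_mul hh0', hxcomp, pcomp_mul hh0', pcomp_C, pcomp_C,
      ← hW, hG2]
  -- step 3 : exponentiate
  have hG20 : constantCoeff G2 = 0 := by rw [hG2]; simp
  have hCsW0 : constantCoeff (C s * W) = 0 := by rw [map_mul, hW0]; simp
  have hCqsW0 : constantCoeff (C (q/s) * W) = 0 := by rw [map_mul, hW0]; simp
  set P := Pexp G2 with hP
  set U1 := Pexp (C s * W) with hU1d
  set U2 := Pexp (C (q/s) * W) with hU2d
  have hA' : P * U1 = 1 + C s * h := by
    rw [hP, hU1d, ← Pexp_add hG20 hCsW0, ← hL2comp, Pexp_pcomp hL2c hh0',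
      Pexp_logOneAdd, pcomp_add, pcomp_one, pcomp_mul hh0', pcomp_C, pcomp_X hh0']
  have hB' : P * U2 = 1 + C (q/s) * h := by
    rw [hP, hU2d, ← Pexp_add hG20 hCqsW0, ← hL1comp, Pexp_pcomp hL1c hh0',
      Pexp_logOneAdd, pcomp_add, pcomp_one, pcomp_mul hh0', pcomp_C, pcomp_X hh0']
  have hD : P * (C s * C s * U2 - C q * U1) = C p := by
    linear_combination (C s * C s) * hB' - (C q) * hA' + h * hc3 + hcsq
  -- step 5 : rescale by -1
  have hrG2 : rescale (-1) G2 = G2 := by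
    rw [hG2]
    ext m
    rw [coeff_rescale]
    by_cases hm : m = 2
    · subst hm; norm_num
    · simp [coeff_C_mul, coeff_X_pow, hm]
  have hresc : ∀ c : ℂ, rescale (-1) (Pexp (C c * W)) = Pexp (C c * V) := by
    intro c
    show rescale (-1) (pcomp (expc 1) (C c * W)) = pcomp (expc 1) (C c * V)
    rw [rescale_pcomp, rescale_C_mul, ← hV]
  have hrP : rescale (-1) P = P := by
    rw [hP]
    show rescale (-1) (pcomp (expc 1) G2) = pcomp (expc 1) G2
    rw [rescale_pcomp, hrG2]
  set Ub1 := Pexp (C s * V) with hUb1d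
  set Ub2 := Pexp (C (q/s) * V) with hUb2d
  have hD2 : P * (C s * C s * Ub2 - C q * Ub1) = C p := by
    have hrc := congrArg (rescale (-1)) hD
    simp only [map_mul, map_sub] at hrc
    rw [hrP, hU1d, hU2d, hresc, hresc, ← hUb1d, ← hUb2d] at hrc
    simp only [rescale_C_self] at hrc
    exact hrc
  have hGsym : C s * C s * U2 - C q * U1
      = C s * C s * Ub2 - C q * Ub1 :=
    mul_left_cancel₀ (by rw [hP]; exact Pexp_ne_zero G2) (hD.trans hD2.symm)
  -- step 6 : even/odd split
  have hCsY0 : constantCoeff (C s * Y) = 0 := by rw [map_mul, hY0]; simp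
  have hCqsY0 : constantCoeff (C (q/s) * Y) = 0 := by rw [map_mul, hY0]; simp
  have hCsM0 : constantCoeff (C s * M) = 0 := by rw [map_mul, hM0]; simp
  have hCqsM0 : constantCoeff (C (q/s) * M) = 0 := by rw [map_mul, hM0]; simp
  have hnCsY0 : constantCoeff (-(C s * Y)) = 0 := by rw [map_neg, hCsY0, neg_zero]
  have hnCqsY0 : constantCoeff (-(C (q/s) * Y)) = 0 := by rw [map_neg, hCqsY0, neg_zero]
  set a := Pexp (C (q/s) * Y) with had
  set b := Pexp (C s * Y) with hbd
  set a' := Pexp (-(C (q/s) * Y)) with had'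
  set b' := Pexp (-(C s * Y)) with hbd'
  set A := Pexp (C (q/s) * M) with hAd
  set B := Pexp (C s * M) with hBd
  have hU1MY : U1 = B * b := by
    rw [hU1d, hWMY, mul_add, Pexp_add hCsM0 hCsY0, ← hBd, ← hbd]
  have hU2MY : U2 = A * a := by
    rw [hU2d, hWMY, mul_add, Pexp_add hCqsM0 hCqsY0, ← hAd, ← had]
  have hUb1MY : Ub1 = B * b' := by
    rw [hUb1d, hVMY, mul_sub, sub_eq_add_neg, Pexp_add hCsM0 hnCsY0, ← hBd, ← hbd']
  have hUb2MY : Ub2 = A * a' := by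
    rw [hUb2d, hVMY, mul_sub, sub_eq_add_neg, Pexp_add hCqsM0 hnCqsY0, ← hAd, ← had']
  have haa' : a * a' = 1 := by
    rw [had, had']; exact Pexp_mul_neg hCqsY0
  have hbb' : b * b' = 1 := by
    rw [hbd, hbd']; exact Pexp_mul_neg hCsY0
  rw [hU1MY, hU2MY, hUb1MY, hUb2MY] at hGsym
  have hstar : (C p + C q) * A * (a^2*b - b) = C q * B * (a*b^2 - a) := by
    linear_combination (a*b) * hGsym + (C s * C s * A * b) * haa'
      - (C q * B * a) * hbb' - (A*(a^2*b - b)) * hcsq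
  -- step 7 : the key relation between h and the exponentials
  rw [hU1MY] at hA'
  rw [hU2MY] at hB'
  rw [hU1MY, hU2MY] at hD
  have hE : P * (B*b - A*a) = C (p/s) * h := by
    linear_combination hA' - hB' + h * hc4
  have step7 : C p * (B*b - A*a)
      = C (p/s) * h * (C s * C s * (A*a) - C q * (B*b)) := by
    linear_combination (C s * C s * (A*a) - C q * (B*b)) * hE - (B*b - A*a) * hD
  have hF : C s * (B*b - A*a) = h * ((C p + C q)*(A*a) - C q*(B*b)) := by
    apply mul_left_cancel₀ (hCne (p/s) (div_ne_zero hp hs))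
    linear_combination step7 + (B*b - A*a) * hc5 + (C (p/s) * h * (A*a)) * hcsq
  -- step 8 : compose htilde with Y
  set K := pcomp htilde Y with hK
  set e1s := Pexp (C (-2*p/s) * Y) with he1d
  set e2s := Pexp (C (2*q/s) * Y) with he2d
  have hKeq : K * (1 - e1s) = C (p/(q*s)) * (e2s - 1) - C (1/s) * (1 - e1s) := by
    have hcg := congrArg (fun F => pcomp F Y) hht
    simp only [pcomp_mul hY0, pcomp_sub, pcomp_one, pcomp_C, pcomp_expc hY0] at hcg
    rw [hK, he1d, he2d]
    exact hcg
  -- relations among exponentials of Y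
  have he2a : e2s = a * a := by
    rw [he2d, hc6, add_mul, Pexp_add hCqsY0 hCqsY0, ← had]
  have he1b : e1s * (b * b) = a * a := by
    have hb2 : b * b = Pexp (C s * Y + C s * Y) := by
      rw [Pexp_add hCsY0 hCsY0, ← hbd]
    have h20 : constantCoeff (C s * Y + C s * Y) = 0 := by
      rw [map_add, hCsY0, add_zero]
    have hn0 : constantCoeff (C (-2*p/s) * Y) = 0 := by rw [map_mul, hY0]; simp
    rw [he1d, hb2, ← Pexp_add hn0 h20]
    rw [show C (-2*p/s) * Y + (C s * Y + C s * Y)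
        = (C (-2*p/s) + (C s + C s)) * Y by ring, hc7, ← he2d, he2a]
  -- derive the equation satisfied by h
  have hKfac : (C p + C q)*(A*a) - C q*(B*b) ≠ 0 := by
    intro hzero
    rw [hAd, had, hBd, hbd] at hzero
    have hcc := congrArg (constantCoeff) hzero
    simp only [map_sub, map_add, map_mul, constantCoeff_Pexp, constantCoeff_C,
      map_zero, mul_one, one_mul] at hcc
    exact hp (by linear_combination hcc)
  have hH2 : C q * C s * h * (b*b - a*a)
      = C p * (b*b) * (a*a - 1) - C q * (b*b - a*a) := by
    apply mul_right_cancel₀ hKfac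
    linear_combination (-(C q * C s * (b*b - a*a))) * hF
      + (C q * (b*b - a*a) * (B*b - A*a)) * hcsq + (-(C p * a * b)) * hstar
  have hfac2 : C (q*s) * (b*b) ≠ 0 := by
    refine mul_ne_zero (hCne _ (mul_ne_zero hq hs)) (mul_ne_zero ?_ ?_) <;>
      (rw [hbd]; exact Pexp_ne_zero _)
  have hH : h * (1 - e1s) = C (p/(q*s)) * (e2s - 1) - C (1/s) * (1 - e1s) := by
    apply mul_right_cancel₀ hfac2
    linear_combination hH2 + (-(C (q*s)*h) - C (1/s)*C (q*s)) * he1b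
      + (-(C (p/(q*s))*C (q*s)*(b*b))) * he2a + (h*(b*b - a*a)) * hc8
      + (-((b*b)*(a*a - 1))) * hc9 + (b*b - a*a) * hc10
  -- conclude K = h
  have hzero : (K - h) * (1 - e1s) = 0 := by linear_combination hKeq - hH
  have hne1 : (1 : PowerSeries ℂ) - e1s ≠ 0 := by
    intro hcon
    have h1 := congrArg (coeff 1) hcon
    rw [map_sub, he1d, coeff_one_Pexp, coeff_C_mul, hY1, map_zero] at h1
    rw [show coeff 1 (1 : PowerSeries ℂ) = 0 by simp] at h1
    have hps : -2*p/s = 0 := by linear_combination -h1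
    rw [div_eq_zero_iff] at hps
    rcases hps with hps | hps
    · exact hp (by linear_combination -hps/2)
    · exact hs hps
  have hKh : K = h := by
    rcases mul_eq_zero.mp hzero with h' | h'
    · exact sub_eq_zero.mp h'
    · exact absurd h' hne1
  rw [hKh]
  exact hfh
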